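/- Weighted L¹ estimate via γ/2-powers (used in Steps 2 and 4 of the convergence proof of the paper's main evolutionary theorem): Let γ ≥ 1 and let (X, μ) be a measure space with 0 < μ(X) < ∞. For every measurable ρ : X → [0,∞), every constant c ≥ 0, and every measurable u : X → ℝ³ such that ρ|u|², |u|² and |ρ^{γ/2} − c^{γ/2}|² are μ-integrable, one has ∫_X |ρ − c| |u| dμ ≤ μ(X)^{(γ−1)/(2γ)} (∫_X |ρ^{γ/2} − c^{γ/2}|² dμ)^{1/(2γ)} [ (∫_X ρ |u|² dμ)^{1/2} + c^{1/2} (∫_X |u|² dμ)^{1/2} ]. -/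

import Mathlib

open MeasureTheory Set

noncomputable section

/-- For `0 ≤ b ≤ a` and `1 ≤ p`, `(a - b)^p ≤ a^p - b^p`. -/
private lemma wL1_sub_rpow_le {a b p : ℝ} (hb : 0 ≤ b) (hba : b ≤ a) (hp : 1 ≤ p) :
    (a - b) ^ p ≤ a ^ p - b ^ p := by
  have h := NNReal.add_rpow_le_rpow_add (Real.toNNReal (a - b)) (Real.toNNReal b) hp
  have h2 : ((Real.toNNReal (a-b) : ℝ))^p + ((Real.toNNReal b : ℝ))^p
      ≤ ((Real.toNNReal (a-b) : ℝ) + (Real.toNNReal b : ℝ))^p := by exact_mod_cast h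
  rw [Real.coe_toNNReal _ (sub_nonneg.2 hba), Real.coe_toNNReal _ hb] at h2
  have hab : a - b + b = a := by ring
  rw [hab] at h2
  linarith

/-- For `a, b ≥ 0` and `p ≥ 1`, `|a - b|^p ≤ |a^p - b^p|`. -/
private lemma wL1_abs_sub_rpow {a b p : ℝ} (ha : 0 ≤ a) (hb : 0 ≤ b) (hp : 1 ≤ p) :
    |a - b| ^ p ≤ |a ^ p - b ^ p| := by
  rcases le_total b a with h | h
  · rw [abs_of_nonneg (sub_nonneg.2 h),
      abs_of_nonneg (sub_nonneg.2 (Real.rpow_le_rpow hb h (le_trans zero_le_one hp)))]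
    exact wL1_sub_rpow_le hb h hp
  · rw [abs_sub_comm, abs_sub_comm (a ^ p),
      abs_of_nonneg (sub_nonneg.2 h),
      abs_of_nonneg (sub_nonneg.2 (Real.rpow_le_rpow ha h (le_trans zero_le_one hp)))]
    exact wL1_sub_rpow_le ha h hp

private lemma wL1_memLp_of_integrable_rpow {X : Type*} [MeasurableSpace X] {μ : Measure X}
    {f : X → ℝ} {p : ℝ} (hp : 0 < p) (hm : AEStronglyMeasurable f μ)
    (hi : Integrable (fun x => |f x| ^ p) μ) :
    MemLp f (ENNReal.ofReal p) μ := by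
  have hq0 : (ENNReal.ofReal p) ≠ 0 := by simp [ENNReal.ofReal_eq_zero, not_le, hp]
  have hqt : (ENNReal.ofReal p) ≠ ⊤ := ENNReal.ofReal_ne_top
  apply (memLp_norm_rpow_iff (q := ENNReal.ofReal p) (p := ENNReal.ofReal p) hm hq0 hqt).1
  rw [ENNReal.div_self hq0 hqt, memLp_one_iff_integrable]
  simpa [Real.norm_eq_abs, ENNReal.toReal_ofReal hp.le] using hi

private lemma wL1_integrable_mul {X : Type*} [MeasurableSpace X] {μ : Measure X}
    {f g : X → ℝ} (hf : MemLp f 2 μ) (hg : MemLp g 2 μ) :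
    Integrable (fun x => f x * g x) μ := by
  have hb : Integrable (fun x => (f x ^ 2 + g x ^ 2) / 2) μ := by
    simpa using ((hf.integrable_sq).add (hg.integrable_sq)).div_const 2
  refine Integrable.mono' hb (hf.1.mul hg.1) (ae_of_all _ fun x => ?_)
  rw [Real.norm_eq_abs, abs_mul]
  nlinarith [sq_nonneg (|f x| - |g x|), abs_nonneg (f x), abs_nonneg (g x),
    sq_abs (f x), sq_abs (g x)]

/-- Cauchy–Schwarz for nonnegative functions. -/
private lemma wL1_cs {X : Type*} [MeasurableSpace X] {μ : Measure X}
    {f g : X → ℝ} (hf0 : ∀ x, 0 ≤ f x) (hg0 : ∀ x, 0 ≤ g x)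
    (hf : MemLp f 2 μ) (hg : MemLp g 2 μ) :
    ∫ x, f x * g x ∂μ ≤ (∫ x, f x ^ 2 ∂μ) ^ ((1:ℝ)/2) * (∫ x, g x ^ 2 ∂μ) ^ ((1:ℝ)/2) := by
  have hpq : Real.HolderConjugate 2 2 := ⟨by norm_num, by norm_num, by norm_num⟩
  have h2 : ENNReal.ofReal (2:ℝ) = 2 := by norm_num
  have h := integral_mul_le_Lp_mul_Lq_of_nonneg hpq (ae_of_all _ hf0) (ae_of_all _ hg0)
    (h2 ▸ hf) (h2 ▸ hg)
  simpa [Real.rpow_two] using h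


theorem weighted_L1_estimate (γ : ℝ) (hγ : 1 ≤ γ)
    (X : Type*) [MeasurableSpace X] (μ : Measure X)
    (hμ0 : 0 < μ univ) (hμfin : μ univ < ⊤)
    (ρ : X → ℝ) (hρm : Measurable ρ) (hρ0 : ∀ x, 0 ≤ ρ x)
    (c : ℝ) (hc : 0 ≤ c)
    (u : X → EuclideanSpace ℝ (Fin 3)) (hum : Measurable u)
    (h1 : Integrable (fun x => ρ x * ‖u x‖ ^ 2) μ)
    (h2 : Integrable (fun x => ‖u x‖ ^ 2) μ)
    (h3 : Integrable (fun x => |ρ x ^ (γ/2) - c ^ (γ/2)| ^ 2) μ) :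
    (∫ x, |ρ x - c| * ‖u x‖ ∂μ)
      ≤ (μ univ).toReal ^ ((γ - 1) / (2 * γ))
          * (∫ x, |ρ x ^ (γ/2) - c ^ (γ/2)| ^ 2 ∂μ) ^ (1 / (2 * γ))
          * ((∫ x, ρ x * ‖u x‖ ^ 2 ∂μ) ^ ((1:ℝ)/2)
              + c ^ ((1:ℝ)/2) * (∫ x, ‖u x‖ ^ 2 ∂μ) ^ ((1:ℝ)/2)) := by
  haveI : IsFiniteMeasure μ := ⟨hμfin⟩
  have hγ0 : 0 < γ := lt_of_lt_of_le zero_lt_one hγ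
  set h : X → ℝ := fun x => |Real.sqrt (ρ x) - Real.sqrt c| with hh
  set H : X → ℝ := fun x => |ρ x ^ (γ/2) - c ^ (γ/2)| with hHdef
  -- measurability
  have hhm : Measurable h := (hρm.sqrt.sub measurable_const).abs
  have hHm : Measurable H :=
    ((((Real.continuous_rpow_const (by positivity : (0:ℝ) ≤ γ/2)).measurable.comp
      hρm)).sub measurable_const).abs
  -- pointwise: h x ^ γ ≤ H x
  have hpt : ∀ x, h x ^ γ ≤ H x := by
    intro x
    have key := wL1_abs_sub_rpow (Real.sqrt_nonneg (ρ x)) (Real.sqrt_nonneg c) hγ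
    have e1 : Real.sqrt (ρ x) ^ γ = ρ x ^ (γ/2) := by
      rw [Real.sqrt_eq_rpow, ← Real.rpow_mul (hρ0 x)]
      congr 1; ring
    have e2 : Real.sqrt c ^ γ = c ^ (γ/2) := by
      rw [Real.sqrt_eq_rpow, ← Real.rpow_mul hc]
      congr 1; ring
    rw [e1, e2] at key
    exact key
  have hH0 : ∀ x, 0 ≤ H x := fun x => abs_nonneg _
  have hh0 : ∀ x, 0 ≤ h x := fun x => abs_nonneg _
  have hpt' : ∀ x, h x ≤ H x ^ (1/γ) := by
    intro x
    calc h x = (h x ^ γ) ^ (1/γ) := by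
          rw [one_div, Real.rpow_rpow_inv (hh0 x) hγ0.ne']
    _ ≤ H x ^ (1/γ) :=
        Real.rpow_le_rpow (Real.rpow_nonneg (hh0 x) γ) (hpt x) (by positivity)
  -- h ∈ L²
  have hh2int : Integrable (fun x => h x ^ 2) μ := by
    refine Integrable.mono' ((integrable_const (1:ℝ)).add h3)
      ((hhm.pow_const 2).aestronglyMeasurable) (ae_of_all _ fun x => ?_)
    rw [Real.norm_eq_abs, abs_of_nonneg (sq_nonneg _)]
    show h x ^ 2 ≤ 1 + H x ^ 2
    have b1 : h x ^ 2 ≤ (H x ^ (1/γ)) ^ 2 := pow_le_pow_left₀ (hh0 x) (hpt' x) 2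
    have b2 : (H x ^ (1/γ)) ^ 2 = H x ^ (2/γ) := by
      rw [← Real.rpow_natCast (H x ^ (1/γ)) 2, ← Real.rpow_mul (hH0 x)]
      congr 1; push_cast; ring
    rcases le_total (H x) 1 with hx | hx
    · have hb : H x ^ ((2:ℝ)/γ) ≤ 1 := Real.rpow_le_one (hH0 x) hx (by positivity)
      rw [b2] at b1
      nlinarith [sq_nonneg (H x)]
    · have h21 : (2:ℝ)/γ ≤ 2 := by
        calc (2:ℝ)/γ ≤ 2/1 :=
              div_le_div_of_nonneg_left (by norm_num) (by norm_num) hγ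
        _ = 2 := by norm_num
      have hb : H x ^ ((2:ℝ)/γ) ≤ H x ^ (2:ℝ) :=
        Real.rpow_le_rpow_of_exponent_le hx h21
      rw [Real.rpow_two] at hb
      rw [b2] at b1
      nlinarith
  have Mh : MemLp h 2 μ := (memLp_two_iff_integrable_sq hhm.aestronglyMeasurable).2 hh2int
  have Mρu : MemLp (fun x => Real.sqrt (ρ x) * ‖u x‖) 2 μ := by
    refine (memLp_two_iff_integrable_sq
      ((hρm.sqrt.mul hum.norm).aestronglyMeasurable)).2 ?_
    have e : (fun x => (Real.sqrt (ρ x) * ‖u x‖) ^ 2) = fun x => ρ x * ‖u x‖ ^ 2 := by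
      funext x; rw [mul_pow, Real.sq_sqrt (hρ0 x)]
    show Integrable (fun x => (Real.sqrt (ρ x) * ‖u x‖) ^ 2) μ
    rw [e]; exact h1
  have Mu : MemLp (fun x => ‖u x‖) 2 μ :=
    (memLp_two_iff_integrable_sq hum.norm.aestronglyMeasurable).2 h2
  -- pointwise identity
  have hident : ∀ x, |ρ x - c| * ‖u x‖
      = h x * (Real.sqrt (ρ x) * ‖u x‖) + Real.sqrt c * (h x * ‖u x‖) := by
    intro x
    have e : ρ x - c = (Real.sqrt (ρ x) - Real.sqrt c) * (Real.sqrt (ρ x) + Real.sqrt c) := by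
      have r1 := Real.sq_sqrt (hρ0 x)
      have r2 := Real.sq_sqrt hc
      nlinarith
    rw [e, abs_mul,
      abs_of_nonneg (by positivity : (0:ℝ) ≤ Real.sqrt (ρ x) + Real.sqrt c)]
    show |Real.sqrt (ρ x) - Real.sqrt c| * _ * _ = _
    ring
  have hintL : ∫ x, |ρ x - c| * ‖u x‖ ∂μ
      = (∫ x, h x * (Real.sqrt (ρ x) * ‖u x‖) ∂μ)
        + Real.sqrt c * ∫ x, h x * ‖u x‖ ∂μ := by
    rw [← integral_const_mul,
      ← integral_add (wL1_integrable_mul Mh Mρu) ((wL1_integrable_mul Mh Mu).const_mul _)]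
    exact integral_congr_ae (ae_of_all _ hident)
  have hB := wL1_cs hh0 (fun x => mul_nonneg (Real.sqrt_nonneg _) (norm_nonneg _)) Mh Mρu
  have hC := wL1_cs hh0 (fun x => norm_nonneg _) Mh Mu
  have eB : ∫ x, (Real.sqrt (ρ x) * ‖u x‖) ^ 2 ∂μ = ∫ x, ρ x * ‖u x‖ ^ 2 ∂μ := by
    apply integral_congr_ae (ae_of_all _ fun x => ?_)
    rw [mul_pow, Real.sq_sqrt (hρ0 x)]
  rw [eB] at hB
  -- abbreviations
  set T := ∫ x, h x ^ 2 ∂μ with hT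
  set A := ∫ x, H x ^ 2 ∂μ with hA
  set B := ∫ x, ρ x * ‖u x‖ ^ 2 ∂μ with hBdef
  set C := ∫ x, ‖u x‖ ^ 2 ∂μ with hCdef
  set M := (μ univ).toReal with hM
  have hT0 : 0 ≤ T := integral_nonneg fun x => sq_nonneg _
  have hA0 : 0 ≤ A := integral_nonneg fun x => sq_nonneg _
  have hB0 : 0 ≤ B := integral_nonneg fun x => mul_nonneg (hρ0 x) (sq_nonneg _)
  have hC0 : 0 ≤ C := integral_nonneg fun x => sq_nonneg _
  have hM0 : 0 ≤ M := ENNReal.toReal_nonneg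
  -- Step 2 : T^{1/2} ≤ M^{(γ-1)/(2γ)} * A^{1/(2γ)}
  have step2 : T ^ ((1:ℝ)/2) ≤ M ^ ((γ - 1)/(2*γ)) * A ^ (1/(2*γ)) := by
    rcases eq_or_lt_of_le hγ with hγ1 | hγ1
    · -- γ = 1
      subst hγ1
      have hTA : T = A := by
        rw [hT, hA]
        apply integral_congr_ae (ae_of_all _ fun x => ?_)
        simp only [hh, hHdef, Real.sqrt_eq_rpow]
      rw [hTA]
      norm_num
    · -- 1 < γ
      have hpq : Real.HolderConjugate γ (γ/(γ-1)) := Real.HolderConjugate.conjExponent hγ1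
      have hptγ : ∀ x, (h x ^ 2) ^ γ ≤ H x ^ 2 := by
        intro x
        have k1 : (h x ^ 2 : ℝ) ^ γ = (h x ^ γ) ^ 2 := by
          rw [← Real.rpow_natCast (h x) 2, ← Real.rpow_mul (hh0 x),
            ← Real.rpow_natCast (h x ^ γ) 2, ← Real.rpow_mul (hh0 x)]
          congr 1; push_cast; ring
        rw [k1]
        exact pow_le_pow_left₀ (Real.rpow_nonneg (hh0 x) γ) (hpt x) 2
      have hint2γ : Integrable (fun x => (h x ^ 2) ^ γ) μ := by
        refine Integrable.mono' h3
          (((Real.continuous_rpow_const hγ0.le).measurable.comp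
            (hhm.pow_const 2)).aestronglyMeasurable) (ae_of_all _ fun x => ?_)
        rw [Real.norm_eq_abs, abs_of_nonneg (Real.rpow_nonneg (sq_nonneg _) γ)]
        exact hptγ x
      have Mf : MemLp (fun x => h x ^ 2) (ENNReal.ofReal γ) μ := by
        apply wL1_memLp_of_integrable_rpow hγ0 ((hhm.pow_const 2).aestronglyMeasurable)
        exact hint2γ.congr (ae_of_all _ fun x => by
          simp [abs_of_nonneg (sq_nonneg (h x))])
      have Mg : MemLp (fun _ : X => (1:ℝ)) (ENNReal.ofReal (γ/(γ-1))) μ := memLp_const 1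
      have hold := integral_mul_le_Lp_mul_Lq_of_nonneg hpq
        (ae_of_all _ fun x => sq_nonneg (h x)) (ae_of_all _ fun _ => zero_le_one) Mf Mg
      simp only [mul_one, Real.one_rpow] at hold
      rw [integral_const, smul_eq_mul, mul_one] at hold
      have hmono : ∫ x, (h x ^ 2) ^ γ ∂μ ≤ A := integral_mono hint2γ h3 fun x => hptγ x
      have h4 : T ≤ A ^ (1/γ) * M ^ (1/(γ/(γ-1))) :=
        le_trans hold (mul_le_mul_of_nonneg_right
          (Real.rpow_le_rpow (integral_nonneg fun x => Real.rpow_nonneg (sq_nonneg _) γ)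
            hmono (by positivity))
          (Real.rpow_nonneg hM0 _))
      have hqe : 1/(γ/(γ-1)) = (γ-1)/γ := by
        field_simp
      rw [hqe] at h4
      calc T ^ ((1:ℝ)/2) ≤ (A ^ (1/γ) * M ^ ((γ-1)/γ)) ^ ((1:ℝ)/2) :=
            Real.rpow_le_rpow hT0 h4 (by norm_num)
      _ = M ^ ((γ - 1)/(2*γ)) * A ^ (1/(2*γ)) := by
          rw [Real.mul_rpow (Real.rpow_nonneg hA0 _) (Real.rpow_nonneg hM0 _),
            ← Real.rpow_mul hA0, ← Real.rpow_mul hM0, mul_comm]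
          congr 1
          · congr 1; ring
          · congr 1; ring
  -- final assembly
  have final1 : ∫ x, |ρ x - c| * ‖u x‖ ∂μ
      ≤ T ^ ((1:ℝ)/2) * (B ^ ((1:ℝ)/2) + Real.sqrt c * C ^ ((1:ℝ)/2)) := by
    rw [hintL]
    have t2 : Real.sqrt c * ∫ x, h x * ‖u x‖ ∂μ
        ≤ Real.sqrt c * (T ^ ((1:ℝ)/2) * C ^ ((1:ℝ)/2)) :=
      mul_le_mul_of_nonneg_left hC (Real.sqrt_nonneg c)
    calc _ ≤ T ^ ((1:ℝ)/2) * B ^ ((1:ℝ)/2)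
          + Real.sqrt c * (T ^ ((1:ℝ)/2) * C ^ ((1:ℝ)/2)) := add_le_add hB t2
    _ = _ := by ring
  have hfac : 0 ≤ B ^ ((1:ℝ)/2) + Real.sqrt c * C ^ ((1:ℝ)/2) := by positivity
  have hfinal := le_trans final1 (mul_le_mul_of_nonneg_right step2 hfac)
  rw [Real.sqrt_eq_rpow c] at hfinal
  exact hfinal
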